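/- For every integer m ≥ 1 and all integers 0 ≤ k ≤ n, the entry B_m(n,k) equals the coefficient of X^n in the formal power series (1−X^m)^{-1}·(X·(1−X)^{-1})^{n−k}. Equivalently, the m-th Pascal-like triangle of the first family is the row-reversed (1/(1−x^m), x/(1−x)) Riordan array. -/

import Mathlib

/-- The `m`-th Pascal-like triangle of the first family: `B m n 0 = 1`,
`B m n n = 1` if `m ∣ n` and `0` otherwise, and Pascal's recurrence
`B m n k = B m (n-1) k + B m (n-1) (k-1)` for `0 < k < n`.
(Values with `k > n` are set to `0`.) -/
def B (m : ℕ) : ℕ → ℕ → ℕ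
  | _, 0 => 1
  | 0, _ + 1 => 0
  | n + 1, k + 1 =>
      if n + 1 = k + 1 then (if m ∣ (n + 1) then 1 else 0)
      else if n + 1 < k + 1 then 0
      else B m n (k + 1) + B m n k

open PowerSeries

lemma coeff_geom (m : ℕ) (hm : 1 ≤ m) (n : ℕ) :
    PowerSeries.coeff (R := ℚ) n (1 - PowerSeries.X ^ m)⁻¹ = if m ∣ n then 1 else 0 := by
  induction n using Nat.strong_induction_on with
  | _ n ih =>
    have hc : constantCoeff (R := ℚ) (1 - X ^ m) = 1 := by
      simp [zero_pow (by omega : m ≠ 0)]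
    have h1 : (1 - X ^ m : ℚ⟦X⟧) * (1 - X ^ m)⁻¹ = 1 :=
      PowerSeries.mul_inv_cancel _ (by rw [hc]; norm_num)
    have h2 := congrArg (coeff (R := ℚ) n) h1
    rw [sub_mul, one_mul, map_sub, coeff_X_pow_mul', coeff_one] at h2
    by_cases hmn : m ≤ n
    · rw [if_pos hmn, ih (n - m) (by omega), if_neg (by omega : ¬ n = 0)] at h2
      have hdvd : (m ∣ n) ↔ (m ∣ n - m) := by
        constructor
        · intro h; exact Nat.dvd_sub h dvd_rfl
        · intro h; have := Nat.dvd_add h (dvd_refl m)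
          rwa [Nat.sub_add_cancel hmn] at this
      by_cases hd : m ∣ n
      · rw [if_pos hd]; rw [if_pos (hdvd.mp hd)] at h2; linarith
      · rw [if_neg hd]; rw [if_neg (fun h => hd (hdvd.mpr h))] at h2; linarith
    · rw [if_neg hmn, sub_zero] at h2
      rw [h2]
      by_cases hn : n = 0
      · simp [hn]
      · rw [if_neg hn, if_neg (fun h => hn (Nat.eq_zero_of_dvd_of_lt h (by omega)))]


/-- The `m`-th triangle of the first family is the row-reversed
`(1/(1-x^m), x/(1-x))` Riordan array: `B m n k` is the coefficient of `X^n`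
in `(1 - X^m)⁻¹ * (X * (1 - X)⁻¹)^(n - k)`. -/
theorem stmt_0 (m : ℕ) (hm : 1 ≤ m) (n k : ℕ) (hk : k ≤ n) :
    (B m n k : ℚ) = PowerSeries.coeff (R := ℚ) n
      ((1 - PowerSeries.X ^ m)⁻¹ *
        (PowerSeries.X * (1 - PowerSeries.X)⁻¹) ^ (n - k)) := by
  induction n using Nat.strong_induction_on generalizing k with
  | _ n ih =>
  set g : ℚ⟦X⟧ := (1 - PowerSeries.X ^ m)⁻¹ with hg
  set f : ℚ⟦X⟧ := PowerSeries.X * (1 - PowerSeries.X)⁻¹ with hf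
  have h1 : (1 - X : ℚ⟦X⟧) * (1 - X)⁻¹ = 1 :=
    PowerSeries.mul_inv_cancel _ (by simp)
  have hfX : f = X * f + X := by
    have h2 : (1 - X : ℚ⟦X⟧) * f = X := by
      rw [hf, ← mul_assoc, mul_comm (1 - X) X, mul_assoc, h1, mul_one]
    linear_combination h2
  rcases eq_or_lt_of_le hk with rfl | hkn
  · -- k = n
    rw [Nat.sub_self, pow_zero, mul_one, hg, coeff_geom m hm]
    cases k with
    | zero => simp [B]
    | succ a =>
      simp only [B, if_pos rfl]
      split_ifs <;> simp
  · obtain ⟨a, rfl⟩ : ∃ a, n = a + 1 := ⟨n - 1, by omega⟩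
    rcases Nat.eq_zero_or_pos k with rfl | hk0
    · -- k = 0
      have hrw : g * f ^ (a + 1) = X ^ (a + 1) * (g * ((1 - X)⁻¹) ^ (a + 1)) := by
        rw [hf, mul_pow]; ring
      rw [Nat.sub_zero, hrw, coeff_X_pow_mul', if_pos le_rfl, Nat.sub_self]
      have : B m (a+1) 0 = 1 := rfl
      rw [this]
      rw [coeff_zero_eq_constantCoeff]
      simp [hg, PowerSeries.constantCoeff_inv, zero_pow (by omega : m ≠ 0)]
    · obtain ⟨b, rfl⟩ : ∃ b, k = b + 1 := ⟨k - 1, by omega⟩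
      have hba : b + 1 ≤ a := by omega
      have hB : B m (a + 1) (b + 1) = B m a (b + 1) + B m a b := by
        rw [B, if_neg (by omega), if_neg (by omega)]
      set j := a - (b + 1) with hj
      have hj1 : a + 1 - (b + 1) = j + 1 := by omega
      have hj2 : a - b = j + 1 := by omega
      have hkey : g * f ^ (j + 1) = X * (g * f ^ (j + 1)) + X * (g * f ^ j) := by
        calc g * f ^ (j + 1) = g * f ^ j * f := by ring
        _ = g * f ^ j * (X * f + X) := by rw [← hfX]
        _ = X * (g * f ^ (j + 1)) + X * (g * f ^ j) := by ring
      rw [hj1, hB, hkey, map_add, coeff_succ_X_mul, coeff_succ_X_mul,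
        ← hj2, Nat.cast_add, ih a (by omega) (b + 1) hba, ih a (by omega) b (by omega), hj2]
      ring
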